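/- Let (W,S) be a Coxeter system, I ⊆ S such that the parabolic subgroup W_I is finite, and suppose the longest element w₀(I) of W_I is central in W_I. Then the centralizer of w₀(I) in W equals the normalizer of W_I in W. -/

import Mathlib

namespace Stmt12Aux

section dihedral
variable {G : Type*} [Group G] {a b : G}

lemma inv_invol (ha : a * a = 1) : a⁻¹ = a := inv_eq_of_mul_eq_one_right ha

lemma ba_pow_eq (ha : a * a = 1) (hb : b * b = 1) (n : ℕ) :
    (b * a) ^ n = ((a * b) ^ n)⁻¹ := by
  rw [← inv_pow]
  congr 1
  rw [mul_inv_rev, inv_invol ha, inv_invol hb]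

lemma b_mul_pow (n : ℕ) : b * (a * b) ^ n = (b * a) ^ n * b := by
  have h : SemiconjBy b (a * b) (b * a) := by
    simp [SemiconjBy, mul_assoc]
  exact (h.pow_right n).eq

lemma a_mul_pow (n : ℕ) : a * (b * a) ^ n = (a * b) ^ n * a := by
  have h : SemiconjBy a (b * a) (a * b) := by
    simp [SemiconjBy, mul_assoc]
  exact (h.pow_right n).eq

section even
variable (ha : a * a = 1) (hb : b * b = 1) {v : ℕ} (hm : (a * b) ^ (v + v) = 1)
include ha hb hm

lemma pow_v_inv : ((a * b) ^ v)⁻¹ = (a * b) ^ v := by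
  apply inv_eq_of_mul_eq_one_right
  rw [← pow_add, hm]

lemma comm_pow_b : Commute ((a * b) ^ v) b := by
  have h1 := b_mul_pow (a := a) (b := b) v
  rw [ba_pow_eq ha hb, pow_v_inv ha hb hm] at h1
  exact h1.symm

lemma comm_pow_a : Commute ((a * b) ^ v) a := by
  have h1 := a_mul_pow (a := a) (b := b) v
  rw [ba_pow_eq ha hb, pow_v_inv ha hb hm] at h1
  exact h1.symm

end even

section odd
variable (ha : a * a = 1) (hb : b * b = 1) {v : ℕ} (hm : (a * b) ^ (v + v + 1) = 1)
include ha hb hm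

lemma odd_succ_inv : (a * b) ^ (v + 1) = ((a * b) ^ v)⁻¹ := by
  apply eq_inv_of_mul_eq_one_right
  rw [← pow_add, show v + (v + 1) = v + v + 1 by omega, hm]

lemma core_odd : (a * b) ^ v * b * (a * b) ^ (v + 1) = b * a * b := by
  rw [mul_assoc, b_mul_pow, ba_pow_eq ha hb, odd_succ_inv ha hb hm, inv_inv, ← mul_assoc,
    ← pow_add]
  have h2v : (a * b) ^ (v + v) = (a * b)⁻¹ := by
    apply eq_inv_of_mul_eq_one_right
    rw [← pow_succ', hm]
  rw [h2v, mul_inv_rev, inv_invol ha, inv_invol hb]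

lemma odd_conj_b : ((a * b) ^ v) * b * ((a * b) ^ v)⁻¹ = b * a * b := by
  have h := core_odd ha hb hm
  rwa [odd_succ_inv ha hb hm] at h

lemma odd_conj_b' : ((a * b) ^ (v + 1))⁻¹ * b * (a * b) ^ (v + 1) = b * a * b := by
  rw [odd_succ_inv ha hb hm, inv_inv]
  exact odd_conj_b ha hb hm

end odd

/-- conjugation by `w * z` equals conjugation by `w` when `z` commutes with the result. -/
lemma conj_mul_eq {z w x : G} (h : Commute z (w⁻¹ * x * w)) :
    (w * z)⁻¹ * x * (w * z) = w⁻¹ * x * w := by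
  have heq : z * (w⁻¹ * x * w) = w⁻¹ * x * w * z := h.eq
  rw [mul_inv_rev]
  calc z⁻¹ * w⁻¹ * x * (w * z) = z⁻¹ * (z * (w⁻¹ * x * w)) := by rw [heq]; group
    _ = w⁻¹ * x * w := by group

lemma dih_even_conj {G : Type*} [Group G] {a b F x : G} {v : ℕ}
    (hF : Commute ((a*b)^v) F) (hx : Commute ((a*b)^v) x) (u : ℕ) :
    (F * (a*b)^(u+v))⁻¹ * x * (F * (a*b)^(u+v)) = (F * (a*b)^u)⁻¹ * x * (F * (a*b)^u) := by
  have hsplit : F * (a*b)^(u+v) = (F * (a*b)^u) * (a*b)^v := by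
    rw [pow_add, mul_assoc]
  rw [hsplit]
  apply conj_mul_eq
  have hc : Commute ((a*b)^v) (F * (a*b)^u) :=
    hF.mul_right (Commute.pow_pow_self _ _ _)
  exact (hc.inv_right.mul_right hx).mul_right hc

section odd2
variable {G : Type*} [Group G] {a b : G} {v : ℕ}
variable (ha : a * a = 1) (hb : b * b = 1) (hmm : (a * b) ^ (v + v + 1) = 1)
include ha hb hmm

lemma dih_odd_keven (u : ℕ) :
    (b * (a*b)^(u+v))⁻¹ * a * (b * (a*b)^(u+v)) = ((a*b)^u)⁻¹ * b * (a*b)^u := by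
  have hsplit : b * (a*b)^(u+v) = (b * (a*b)^v) * (a*b)^u := by
    rw [add_comm u v, pow_add, mul_assoc]
  rw [hsplit]
  have hD1 : (b * (a*b)^v)⁻¹ * a * (b * (a*b)^v) = b := by
    have h := odd_conj_b ha hb hmm
    rw [mul_inv_rev, inv_invol hb]
    calc ((a*b)^v)⁻¹ * b * a * (b * (a*b)^v)
        = ((a*b)^v)⁻¹ * (b*a*b) * (a*b)^v := by group
      _ = ((a*b)^v)⁻¹ * ((a*b)^v * b * ((a*b)^v)⁻¹) * (a*b)^v := by rw [h]
      _ = b := by group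
  calc ((b * (a*b)^v) * (a*b)^u)⁻¹ * a * ((b * (a*b)^v) * (a*b)^u)
      = ((a*b)^u)⁻¹ * ((b * (a*b)^v)⁻¹ * a * (b * (a*b)^v)) * (a*b)^u := by group
    _ = ((a*b)^u)⁻¹ * b * (a*b)^u := by rw [hD1]

lemma dih_odd_kodd (u : ℕ) :
    ((a*b)^(u+1+v))⁻¹ * b * ((a*b)^(u+1+v)) = (b * (a*b)^u)⁻¹ * a * (b * (a*b)^u) := by
  have hsplit : (a*b)^(u+1+v) = (a*b)^(v+1) * (a*b)^u := by
    rw [← pow_add]; congr 1; omega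
  rw [hsplit]
  have hD2 : ((a*b)^(v+1))⁻¹ * b * ((a*b)^(v+1)) = b * a * b := odd_conj_b' ha hb hmm
  have hRHS : (b * (a*b)^u)⁻¹ * a * (b * (a*b)^u) = ((a*b)^u)⁻¹ * (b*a*b) * (a*b)^u := by
    rw [mul_inv_rev, inv_invol hb]; group
  rw [hRHS]
  calc ((a*b)^(v+1) * (a*b)^u)⁻¹ * b * ((a*b)^(v+1) * (a*b)^u)
      = ((a*b)^u)⁻¹ * (((a*b)^(v+1))⁻¹ * b * (a*b)^(v+1)) * (a*b)^u := by group
    _ = ((a*b)^u)⁻¹ * (b*a*b) * (a*b)^u := by rw [hD2]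

end odd2

end dihedral

section perm

open CoxeterSystem List
open scoped Classical

variable {B W : Type*} [Group W] {M : CoxeterMatrix B} (cs : CoxeterSystem M W)

local prefix:100 "σπ" => cs.wordProd

lemma rightInvSeq_cons' (i : B) (ω : List B) :
    cs.rightInvSeq (i :: ω) =
      ((cs.wordProd ω)⁻¹ * cs.simple i * cs.wordProd ω) :: cs.rightInvSeq ω := rfl

noncomputable def sigmaToFun (i : B) : W × ZMod 2 → W × ZMod 2 := fun p =>
  (cs.simple i * p.1 * cs.simple i, if p.1 = cs.simple i then p.2 + 1 else p.2)

lemma sigmaToFun_involutive (i : B) : Function.Involutive (sigmaToFun cs i) := by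
  rintro ⟨t, e⟩
  unfold sigmaToFun
  simp only
  have hfst : cs.simple i * (cs.simple i * t * cs.simple i) * cs.simple i = t := by
    calc cs.simple i * (cs.simple i * t * cs.simple i) * cs.simple i
        = cs.simple i * (cs.simple i * (t * (cs.simple i * cs.simple i))) := by group
      _ = t := by rw [cs.simple_mul_simple_self, mul_one, cs.simple_mul_simple_cancel_left]
  have hcond : (cs.simple i * t * cs.simple i = cs.simple i) ↔ t = cs.simple i := by
    constructor
    · intro h
      have := congrArg (fun x => (cs.simple i)⁻¹ * x * (cs.simple i)⁻¹) h
      simpa [mul_assoc] using this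
    · rintro rfl
      rw [cs.simple_mul_simple_self, one_mul]
  ext
  · simp [hfst]
  · simp only [hfst]
    by_cases h : t = cs.simple i
    · subst h
      have h1 : cs.simple i * cs.simple i * cs.simple i = cs.simple i := by
        rw [cs.simple_mul_simple_self, one_mul]
      rw [if_pos rfl, if_pos h1]
      have h2 : ∀ x : ZMod 2, x + 1 + 1 = x := by decide
      exact h2 e
    · rw [if_neg (fun hc => h (hcond.mp hc)), if_neg h]

noncomputable def sigmaPerm (i : B) : Equiv.Perm (W × ZMod 2) := (sigmaToFun_involutive cs i).toPerm

lemma sigmaPerm_apply (i : B) (t : W) (ε : ZMod 2) :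
    sigmaPerm cs i (t, ε) =
      (cs.simple i * t * cs.simple i, if t = cs.simple i then ε + 1 else ε) := rfl

lemma prod_map_sigmaPerm (ω : List B) (t : W) (ε : ZMod 2) :
    ((ω.map (sigmaPerm cs)).prod) (t, ε) =
      (cs.wordProd ω * t * (cs.wordProd ω)⁻¹,
        ε + (List.count t (cs.rightInvSeq ω) : ZMod 2)) := by
  induction ω generalizing t ε with
  | nil => simp
  | cons i ω ih =>
    rw [List.map_cons, List.prod_cons, Equiv.Perm.mul_apply, ih, sigmaPerm_apply,
      rightInvSeq_cons', cs.wordProd_cons]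
    ext
    · simp only
      rw [mul_inv_rev, cs.inv_simple]
      group
    · simp only [List.count_cons, beq_iff_eq]
      have hcond : (cs.wordProd ω * t * (cs.wordProd ω)⁻¹ = cs.simple i)
          ↔ ((cs.wordProd ω)⁻¹ * cs.simple i * cs.wordProd ω = t) := by
        constructor
        · intro h; rw [← h]; group
        · intro h; rw [← h]; group
      by_cases h : (cs.wordProd ω)⁻¹ * cs.simple i * cs.wordProd ω = t
      · rw [if_pos (hcond.mpr h), if_pos h]
        push_cast
        ring
      · rw [if_neg (fun hc => h (hcond.mp hc)), if_neg h]
        push_cast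
        ring

lemma drop_alternatingWord (i j : B) (q n : ℕ) :
    (CoxeterSystem.alternatingWord i j n).drop q = CoxeterSystem.alternatingWord i j (n - q) := by
  induction q generalizing n with
  | zero => simp
  | succ q ih =>
    cases n with
    | zero => simp [CoxeterSystem.alternatingWord]
    | succ n =>
      rw [CoxeterSystem.alternatingWord_succ' i j n, List.drop_succ_cons, ih n]
      congr 1
      omega

lemma get?_alternatingWord (i j : B) (n p : ℕ) (h : p < n) :
    (CoxeterSystem.alternatingWord i j n)[p]? =
      some (if Even (n - p - 1) then j else i) := by
  have h1 : (CoxeterSystem.alternatingWord i j n)[p]?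
      = ((CoxeterSystem.alternatingWord i j n).drop p)[0]? := by
    rw [List.getElem?_drop, Nat.add_zero]
  rw [h1, drop_alternatingWord]
  have h2 : n - p = (n - p - 1) + 1 := by omega
  rw [h2, CoxeterSystem.alternatingWord_succ' i j (n - p - 1)]
  rfl

/-- The reflection `π(alt i j k)⁻¹ * (last letter) * π(alt i j k)`. -/
noncomputable def entry (i j : B) (k : ℕ) : W :=
  (cs.wordProd (CoxeterSystem.alternatingWord i j k))⁻¹ *
    (if Even k then cs.simple j else cs.simple i) *
    cs.wordProd (CoxeterSystem.alternatingWord i j k)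

lemma getD_ris_alternatingWord (i j : B) (n p : ℕ) (h : p < n) :
    (cs.rightInvSeq (CoxeterSystem.alternatingWord i j n)).getD p 1
      = entry cs i j (n - p - 1) := by
  rw [cs.getD_rightInvSeq, drop_alternatingWord, get?_alternatingWord i j n p h]
  rw [entry]
  have : n - (p + 1) = n - p - 1 := by omega
  rw [this]
  congr 1
  · congr 1
    rw [Option.map_some, Option.getD_some, apply_ite cs.simple]

lemma entry_periodic (i j : B) (k : ℕ) :
    entry cs i j (k + M i j) = entry cs i j k := by
  have ha : cs.simple i * cs.simple i = 1 := cs.simple_mul_simple_self i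
  have hb : cs.simple j * cs.simple j = 1 := cs.simple_mul_simple_self j
  have hm : (cs.simple i * cs.simple j) ^ (M i j) = 1 := cs.simple_mul_simple_pow i j
  rw [entry, entry, cs.prod_alternatingWord_eq_mul_pow, cs.prod_alternatingWord_eq_mul_pow]
  rcases Nat.even_or_odd (M i j) with ⟨v, hv⟩ | ⟨v, hv⟩
  · -- even case
    rw [hv] at hm
    have h0 : Even (v + v) := ⟨v, rfl⟩
    have hEv : Even (k + M i j) ↔ Even k := by
      rw [hv, Nat.even_add]
      exact ⟨fun h => h.mpr h0, fun hk => iff_of_true hk h0⟩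
    have hdiv : (k + M i j) / 2 = k / 2 + v := by omega
    have hEite : (if Even (k + M i j) then (1:W) else cs.simple j)
        = (if Even k then 1 else cs.simple j) := by
      by_cases hk : Even k
      · rw [if_pos hk, if_pos (hEv.mpr hk)]
      · rw [if_neg hk, if_neg (fun hc => hk (hEv.mp hc))]
    have hXite : (if Even (k + M i j) then cs.simple j else cs.simple i)
        = (if Even k then cs.simple j else cs.simple i) := by
      by_cases hk : Even k
      · rw [if_pos hk, if_pos (hEv.mpr hk)]
      · rw [if_neg hk, if_neg (fun hc => hk (hEv.mp hc))]
    rw [hEite, hXite, hdiv]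
    apply dih_even_conj
    · by_cases hk : Even k
      · rw [if_pos hk]; exact Commute.one_right _
      · rw [if_neg hk]; exact comm_pow_b ha hb hm
    · by_cases hk : Even k
      · rw [if_pos hk]; exact comm_pow_b ha hb hm
      · rw [if_neg hk]; exact comm_pow_a ha hb hm
  · -- odd case
    rw [hv] at hm
    have hmm : (cs.simple i * cs.simple j) ^ (v + v + 1) = 1 := by
      rw [← hm]; congr 1; omega
    rcases Nat.even_or_odd k with ⟨u, hu⟩ | ⟨u, hu⟩
    · -- k even
      have h1 : ¬ Even (k + M i j) := by
        rw [hv, hu]; intro hc; rcases hc with ⟨x, hx⟩; omega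
      have h2 : Even k := ⟨u, hu⟩
      rw [if_neg h1, if_neg h1, if_pos h2, if_pos h2, one_mul]
      have hd1 : (k + M i j) / 2 = u + v := by omega
      have hd2 : k / 2 = u := by omega
      rw [hd1, hd2]
      exact dih_odd_keven ha hb hmm u
    · -- k odd
      have h1 : Even (k + M i j) := by rw [hv, hu]; exact ⟨u + v + 1, by omega⟩
      have h2 : ¬ Even k := by rw [hu]; intro hc; rcases hc with ⟨x, hx⟩; omega
      rw [if_pos h1, if_pos h1, if_neg h2, if_neg h2, one_mul]
      have hd1 : (k + M i j) / 2 = u + 1 + v := by omega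
      have hd2 : k / 2 = u := by omega
      rw [hd1, hd2]
      exact dih_odd_kodd ha hb hmm u

lemma ris_alt_split (i j : B) :
    cs.rightInvSeq (CoxeterSystem.alternatingWord i j (2 * M i j)) =
      cs.rightInvSeq (CoxeterSystem.alternatingWord i j (M i j)) ++
        cs.rightInvSeq (CoxeterSystem.alternatingWord i j (M i j)) := by
  have hlen : ∀ n : ℕ, (cs.rightInvSeq (CoxeterSystem.alternatingWord i j n)).length = n := by
    intro n
    rw [cs.length_rightInvSeq, CoxeterSystem.length_alternatingWord]
  apply List.ext_getElem
  · simp [hlen]; omega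
  · intro p h1 h2
    rw [← List.getD_eq_getElem _ 1 h1, ← List.getD_eq_getElem _ 1 h2]
    have hp2 : p < 2 * M i j := by rwa [hlen] at h1
    rw [getD_ris_alternatingWord cs i j _ p hp2]
    by_cases hp : p < M i j
    · rw [List.getD_append _ _ _ _ (by rw [hlen]; exact hp),
        getD_ris_alternatingWord cs i j _ p hp]
      have hidx : 2 * M i j - p - 1 = (M i j - p - 1) + M i j := by omega
      rw [hidx, entry_periodic]
    · rw [List.getD_append_right _ _ _ _ (by rw [hlen]; omega)]
      have hplt : p - (cs.rightInvSeq (CoxeterSystem.alternatingWord i j (M i j))).length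
          = p - M i j := by rw [hlen]
      rw [hplt, getD_ris_alternatingWord cs i j _ _ (by omega)]
      congr 1
      omega

lemma sigmaPerm_liftable : CoxeterMatrix.IsLiftable M (sigmaPerm cs) := by
  intro i j
  have hpow : ∀ n : ℕ, (sigmaPerm cs i * sigmaPerm cs j) ^ n =
      ((CoxeterSystem.alternatingWord i j (2 * n)).map (sigmaPerm cs)).prod := by
    intro n
    induction n with
    | zero => simp [CoxeterSystem.alternatingWord]
    | succ n ih =>
      have h1 : 2 * (n + 1) = (2 * n + 1) + 1 := by omega
      rw [h1, CoxeterSystem.alternatingWord_succ' i j (2 * n + 1),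
        CoxeterSystem.alternatingWord_succ' i j (2 * n)]
      rw [if_neg (by intro hc; rcases hc with ⟨x, hx⟩; omega), if_pos ⟨n, by omega⟩]
      rw [List.map_cons, List.map_cons, List.prod_cons, List.prod_cons, ← ih, pow_succ']
      rw [← mul_assoc]
  rw [hpow]
  apply Equiv.ext
  rintro ⟨t, ε⟩
  rw [prod_map_sigmaPerm]
  have hπ : cs.wordProd (CoxeterSystem.alternatingWord i j (2 * M i j)) = 1 := by
    rw [cs.prod_alternatingWord_eq_mul_pow, if_pos ⟨M i j, by omega⟩,
      one_mul, show 2 * M i j / 2 = M i j by omega, cs.simple_mul_simple_pow]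
  have hcount : (List.count t
      (cs.rightInvSeq (CoxeterSystem.alternatingWord i j (2 * M i j))) : ZMod 2) = 0 := by
    rw [ris_alt_split, List.count_append]
    push_cast
    have : ∀ x : ZMod 2, x + x = 0 := by decide
    exact this _
  rw [hπ, hcount]
  simp

noncomputable def rho : W →* Equiv.Perm (W × ZMod 2) :=
  cs.lift ⟨sigmaPerm cs, sigmaPerm_liftable cs⟩

lemma rho_simple (i : B) : rho cs (cs.simple i) = sigmaPerm cs i :=
  cs.lift_apply_simple (sigmaPerm_liftable cs) i

lemma rho_wordProd (ω : List B) : rho cs (cs.wordProd ω) = (ω.map (sigmaPerm cs)).prod := by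
  induction ω with
  | nil => simp [cs.wordProd_nil]
  | cons i ω ih =>
    rw [cs.wordProd_cons, map_mul, rho_simple, List.map_cons, List.prod_cons, ih]

noncomputable def eta (w t : W) : ZMod 2 := (rho cs w (t, 0)).2

lemma eta_count (ω : List B) (t : W) :
    eta cs (cs.wordProd ω) t = (List.count t (cs.rightInvSeq ω) : ZMod 2) := by
  rw [eta, rho_wordProd, prod_map_sigmaPerm]
  simp

lemma rho_apply (w t : W) (ε : ZMod 2) :
    rho cs w (t, ε) = (w * t * w⁻¹, ε + eta cs w t) := by
  obtain ⟨ω, rfl⟩ := cs.wordProd_surjective w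
  rw [rho_wordProd, prod_map_sigmaPerm, eta_count]

lemma eta_mul (x y t : W) :
    eta cs (x * y) t = eta cs x (y * t * y⁻¹) + eta cs y t := by
  have h : rho cs (x * y) (t, 0) = rho cs x (rho cs y (t, 0)) := by
    rw [map_mul]; rfl
  rw [eta, h, rho_apply, rho_apply]
  simp only
  ring

lemma rightInvSeq_append (ω₁ ω₂ : List B) :
    cs.rightInvSeq (ω₁ ++ ω₂) =
      (cs.rightInvSeq ω₁).map (fun x => (cs.wordProd ω₂)⁻¹ * x * cs.wordProd ω₂)
        ++ cs.rightInvSeq ω₂ := by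
  induction ω₁ with
  | nil => simp
  | cons i ω₁ ih =>
    rw [List.cons_append, rightInvSeq_cons', rightInvSeq_cons', ih, List.map_cons,
      List.cons_append]
    congr 1
    rw [cs.wordProd_append, mul_inv_rev]
    group

lemma leftInvSeq_cons' (i : B) (ω : List B) :
    cs.leftInvSeq (i :: ω) =
      cs.simple i :: (cs.leftInvSeq ω).map (MulAut.conj (cs.simple i)) := rfl

lemma leftInvSeq_eq_map (ω : List B) :
    cs.leftInvSeq ω =
      (cs.rightInvSeq ω).map (fun x => cs.wordProd ω * x * (cs.wordProd ω)⁻¹) := by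
  induction ω with
  | nil => simp
  | cons i ω ih =>
    rw [leftInvSeq_cons', rightInvSeq_cons', List.map_cons, ih, List.map_map]
    congr 1
    · rw [cs.wordProd_cons, mul_inv_rev, cs.inv_simple]
      symm
      calc cs.simple i * cs.wordProd ω * ((cs.wordProd ω)⁻¹ * cs.simple i * cs.wordProd ω) *
            ((cs.wordProd ω)⁻¹ * cs.simple i)
          = cs.simple i * (cs.simple i * cs.simple i) := by group
        _ = cs.simple i := by rw [cs.simple_mul_simple_self, mul_one]
    · apply List.map_congr_left
      intro x _
      simp only [Function.comp_apply, MulAut.conj_apply, cs.wordProd_cons, mul_inv_rev,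
        cs.inv_simple]
      group

lemma count_map_conj (y : W) (l : List W) (t : W) :
    List.count t (l.map (fun x => y * x * y⁻¹)) = List.count (y⁻¹ * t * y) l := by
  have hinj : Function.Injective (fun x : W => y * x * y⁻¹) := by
    intro x1 x2 h
    simp only at h
    have := congrArg (fun z => y⁻¹ * z * y) h
    simpa [mul_assoc] using this
  have hxt : t = (fun x : W => y * x * y⁻¹) (y⁻¹ * t * y) := by group
  rw [hxt, List.count_map_of_injective _ _ hinj]
  congr 1
  group

lemma eta_reflection_self {t : W} (ht : cs.IsReflection t) : eta cs t t = 1 := by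
  obtain ⟨u, i, rfl⟩ := ht
  obtain ⟨μ, rfl⟩ := cs.wordProd_surjective u
  set ω := μ ++ i :: μ.reverse with hω
  have hπω : cs.wordProd ω = cs.wordProd μ * cs.simple i * (cs.wordProd μ)⁻¹ := by
    rw [hω, cs.wordProd_append, cs.wordProd_cons, cs.wordProd_reverse]
    group
  have hcnt := eta_count cs ω (cs.wordProd μ * cs.simple i * (cs.wordProd μ)⁻¹)
  rw [hπω] at hcnt
  rw [hcnt]
  set t := cs.wordProd μ * cs.simple i * (cs.wordProd μ)⁻¹ with htdef
  rw [hω, rightInvSeq_append, List.count_append, rightInvSeq_cons']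
  have hmid : (cs.wordProd μ.reverse)⁻¹ * cs.simple i * cs.wordProd μ.reverse = t := by
    rw [cs.wordProd_reverse, inv_inv, htdef]
  rw [hmid, List.count_cons]
  have hc1 : List.count t ((cs.rightInvSeq μ).map
      (fun x => (cs.wordProd (i :: μ.reverse))⁻¹ * x * cs.wordProd (i :: μ.reverse)))
      = List.count (cs.simple i) (cs.rightInvSeq μ) := by
    have h1 : (fun x => (cs.wordProd (i :: μ.reverse))⁻¹ * x * cs.wordProd (i :: μ.reverse))
        = (fun x => ((cs.wordProd (i :: μ.reverse))⁻¹) * x *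
            (((cs.wordProd (i :: μ.reverse))⁻¹))⁻¹) := by
      funext x; rw [inv_inv]
    rw [h1, count_map_conj]
    congr 1
    rw [inv_inv, cs.wordProd_cons, cs.wordProd_reverse, htdef, mul_inv_rev, cs.inv_simple,
      inv_inv]
    calc cs.simple i * (cs.wordProd μ)⁻¹ * (cs.wordProd μ * cs.simple i * (cs.wordProd μ)⁻¹) *
          (cs.wordProd μ * cs.simple i)
        = cs.simple i * (cs.simple i * cs.simple i) := by group
      _ = cs.simple i := by rw [cs.simple_mul_simple_self, mul_one]
  have hc2 : List.count t (cs.rightInvSeq μ.reverse)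
      = List.count (cs.simple i) (cs.rightInvSeq μ) := by
    rw [cs.rightInvSeq_reverse, List.count_reverse, leftInvSeq_eq_map, count_map_conj]
    congr 1
    rw [htdef]
    group
  rw [hc1, hc2, if_pos (beq_self_eq_true t)]
  push_cast
  have : ∀ x : ZMod 2, x + (x + 1) = 1 := by decide
  exact this _

lemma mem_ris_of_eta_one {ω : List B} {t : W} (h : eta cs (cs.wordProd ω) t = 1) :
    t ∈ cs.rightInvSeq ω := by
  rw [eta_count] at h
  by_contra hmem
  rw [← List.count_eq_zero] at hmem
  rw [hmem] at h
  simp at h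

lemma isRightInversion_iff_eta {t : W} (ht : cs.IsReflection t) (w : W) :
    cs.IsRightInversion w t ↔ eta cs w t = 1 := by
  constructor
  · rintro ⟨-, hlt⟩
    have hw : w = (w * t) * t := by rw [mul_assoc, ht.mul_self, mul_one]
    have h1 : eta cs w t = eta cs (w * t) (t * t * t⁻¹) + eta cs t t := by
      conv_lhs => rw [hw]
      exact eta_mul cs (w * t) t t
    have h2 : t * t * t⁻¹ = t := by rw [ht.mul_self, one_mul, ht.inv]
    have h3 : eta cs (w * t) t ≠ 1 := by
      intro hc
      obtain ⟨ω, hred, hw'⟩ := cs.exists_reduced_word' (w * t)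
      rw [hw'] at hc
      have hmem := mem_ris_of_eta_one cs hc
      have hinv := cs.isRightInversion_of_mem_rightInvSeq hred hmem
      rw [← hw'] at hinv
      have := hinv.2
      rw [mul_assoc, ht.mul_self, mul_one] at this
      omega
    have h4 : eta cs (w * t) t = 0 := by
      have hall : ∀ x : ZMod 2, x = 0 ∨ x = 1 := by decide
      rcases hall (eta cs (w * t) t) with h | h
      · exact h
      · exact absurd h h3
    rw [h1, h2, h4, eta_reflection_self cs ht, zero_add]
  · intro h
    obtain ⟨ω, hred, hw'⟩ := cs.exists_reduced_word' w
    rw [hw'] at h ⊢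
    exact cs.isRightInversion_of_mem_rightInvSeq hred (mem_ris_of_eta_one cs h)

section parabolic

variable (I : Set B)

lemma wordProd_mem {ω : List B} (h : ∀ b ∈ ω, b ∈ I) :
    cs.wordProd ω ∈ Subgroup.closure (cs.simple '' I) := by
  induction ω with
  | nil => rw [cs.wordProd_nil]; exact one_mem _
  | cons i ω ih =>
    rw [cs.wordProd_cons]
    exact mul_mem (Subgroup.subset_closure ⟨i, h i (List.mem_cons_self), rfl⟩)
      (ih (fun b hb => h b (List.mem_cons_of_mem i hb)))

lemma exists_word_of_mem {w : W} (h : w ∈ Subgroup.closure (cs.simple '' I)) :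
    ∃ ω : List B, (∀ b ∈ ω, b ∈ I) ∧ w = cs.wordProd ω := by
  induction h using Subgroup.closure_induction with
  | mem x hx =>
    obtain ⟨i, hi, rfl⟩ := hx
    exact ⟨[i], by simpa using hi, (cs.wordProd_singleton i).symm⟩
  | one => exact ⟨[], by simp, by simp⟩
  | mul x y hx hy ihx ihy =>
    obtain ⟨ω₁, h₁, rfl⟩ := ihx
    obtain ⟨ω₂, h₂, rfl⟩ := ihy
    refine ⟨ω₁ ++ ω₂, ?_, (cs.wordProd_append ω₁ ω₂).symm⟩
    intro b hb
    rcases List.mem_append.mp hb with hb | hb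
    · exact h₁ b hb
    · exact h₂ b hb
  | inv x hx ih =>
    obtain ⟨ω, h₁, rfl⟩ := ih
    exact ⟨ω.reverse, fun b hb => h₁ b (List.mem_reverse.mp hb),
      (cs.wordProd_reverse ω).symm⟩

lemma ris_subset {ω : List B} (h : ∀ b ∈ ω, b ∈ I) :
    ∀ t ∈ cs.rightInvSeq ω, t ∈ Subgroup.closure (cs.simple '' I) := by
  induction ω with
  | nil => simp
  | cons i ω ih =>
    intro t ht
    rw [rightInvSeq_cons'] at ht
    have hω : ∀ b ∈ ω, b ∈ I := fun b hb => h b (List.mem_cons_of_mem i hb)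
    rcases List.mem_cons.mp ht with rfl | ht
    · exact mul_mem (mul_mem (inv_mem (wordProd_mem cs I hω))
        (Subgroup.subset_closure ⟨i, h i (List.mem_cons_self), rfl⟩))
        (wordProd_mem cs I hω)
    · exact ih hω t ht

lemma mem_P_of_eta_one {w t : W} (hw : w ∈ Subgroup.closure (cs.simple '' I))
    (h : eta cs w t = 1) : t ∈ Subgroup.closure (cs.simple '' I) := by
  obtain ⟨ω, hω, rfl⟩ := exists_word_of_mem cs I hw
  exact ris_subset cs I hω t (mem_ris_of_eta_one cs h)

lemma invSet_finite (w : W) : {t : W | cs.IsRightInversion w t}.Finite := by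
  obtain ⟨ω, hred, rfl⟩ := cs.exists_reduced_word' w
  apply Set.Finite.subset (cs.rightInvSeq ω).finite_toSet
  intro t ht
  exact mem_ris_of_eta_one cs ((isRightInversion_iff_eta cs ht.1 _).mp ht)

lemma ncard_invSet (w : W) : {t : W | cs.IsRightInversion w t}.ncard = cs.length w := by
  obtain ⟨ω, hred, rfl⟩ := cs.exists_reduced_word' w
  have hset : {t : W | cs.IsRightInversion (cs.wordProd ω) t} = ↑(cs.rightInvSeq ω).toFinset := by
    ext t
    simp only [Set.mem_setOf_eq, Finset.coe_sort_coe, List.coe_toFinset, Set.mem_setOf_eq]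
    constructor
    · intro ht
      exact mem_ris_of_eta_one cs ((isRightInversion_iff_eta cs ht.1 _).mp ht)
    · intro ht
      exact cs.isRightInversion_of_mem_rightInvSeq hred ht
  rw [hset, Set.ncard_coe_finset, List.toFinset_card_of_nodup hred.nodup_rightInvSeq,
    cs.length_rightInvSeq]
  exact hred.symm

end parabolic

end perm

end Stmt12Aux
open Stmt12Aux in
/-- Let `W_I` be a finite standard parabolic subgroup of a
Coxeter group and `w₀(I)` its longest element; if `w₀(I)` is central in `W_I`,
then the centralizer of `w₀(I)` in `W` equals the normalizer of `W_I`. -/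
theorem stmt_12 {B W : Type*} [Group W] {M : CoxeterMatrix B}
    (cs : CoxeterSystem M W) (I : Set B)
    (hfin : ((Subgroup.closure (cs.simple '' I) : Subgroup W) : Set W).Finite)
    (w0 : W) (hmem : w0 ∈ Subgroup.closure (cs.simple '' I))
    (hlongest : ∀ u ∈ Subgroup.closure (cs.simple '' I), cs.length u ≤ cs.length w0)
    (hcentral : ∀ u ∈ Subgroup.closure (cs.simple '' I), w0 * u = u * w0) :
    Subgroup.centralizer {w0} =
      Subgroup.normalizer (Subgroup.closure (cs.simple '' I)) := by
  classical
  have hzmod : ∀ x : ZMod 2, x = 0 ∨ x = 1 := by decide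
  -- reflections of the parabolic are exactly the right inversions of `w0`
  have hPrefl_to_inv : ∀ t : W, t ∈ Subgroup.closure (cs.simple '' I) → cs.IsReflection t →
      cs.IsRightInversion w0 t := by
    intro t htP htR
    exact ⟨htR, lt_of_le_of_ne (hlongest _ (mul_mem hmem htP)) (htR.length_mul_left_ne w0)⟩
  have hinv_to_P : ∀ t : W, cs.IsRightInversion w0 t → t ∈ Subgroup.closure (cs.simple '' I) := by
    intro t ht
    exact mem_P_of_eta_one cs I hmem ((isRightInversion_iff_eta cs ht.1 w0).mp ht)
  have heta1_of : ∀ t : W, t ∈ Subgroup.closure (cs.simple '' I) → cs.IsReflection t →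
      eta cs w0 t = 1 := by
    intro t htP htR
    exact (isRightInversion_iff_eta cs htR w0).mp (hPrefl_to_inv t htP htR)
  have hP_of_eta1 : ∀ t : W, cs.IsReflection t → eta cs w0 t = 1 →
      t ∈ Subgroup.closure (cs.simple '' I) := by
    intro t htR h1
    exact hinv_to_P t ((isRightInversion_iff_eta cs htR w0).mpr h1)
  have hcentral' : ∀ x ∈ Subgroup.closure (cs.simple '' I), w0 * x * w0⁻¹ = x := by
    intro x hx
    rw [hcentral x hx, mul_assoc, mul_inv_cancel, mul_one]
  have hinvset_sub : ∀ u ∈ Subgroup.closure (cs.simple '' I),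
      {t : W | cs.IsRightInversion u t} ⊆ {t : W | cs.IsRightInversion w0 t} := by
    intro u hu t ht
    exact hPrefl_to_inv t
      (mem_P_of_eta_one cs I hu ((isRightInversion_iff_eta cs ht.1 u).mp ht)) ht.1
  -- the longest-element length subtraction formula
  have hG1 : ∀ u ∈ Subgroup.closure (cs.simple '' I),
      cs.length (w0 * u) = cs.length w0 - cs.length u := by
    intro u hu
    have hsub := hinvset_sub u hu
    have hset : {t : W | cs.IsRightInversion (w0 * u) t}
        = {t : W | cs.IsRightInversion w0 t} \ {t : W | cs.IsRightInversion u t} := by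
      ext t
      simp only [Set.mem_setOf_eq, Set.mem_diff]
      constructor
      · intro ht
        have htR := ht.1
        have he : eta cs w0 (u * t * u⁻¹) + eta cs u t = 1 := by
          rw [← eta_mul]
          exact (isRightInversion_iff_eta cs htR _).mp ht
        have hcR : cs.IsReflection (u * t * u⁻¹) := htR.conj u
        by_cases h2 : eta cs u t = 1
        · have htP : t ∈ Subgroup.closure (cs.simple '' I) := mem_P_of_eta_one cs I hu h2
          have h1 : eta cs w0 (u * t * u⁻¹) = 1 :=
            heta1_of _ (mul_mem (mul_mem hu htP) (inv_mem hu)) hcR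
          rw [h1, h2] at he
          exact absurd he (by decide)
        · have h2' : eta cs u t = 0 := (hzmod _).resolve_right h2
          have h1 : eta cs w0 (u * t * u⁻¹) = 1 := by rwa [h2', add_zero] at he
          have hutP := hP_of_eta1 _ hcR h1
          have htP : t ∈ Subgroup.closure (cs.simple '' I) := by
            have hm2 := mul_mem (mul_mem (inv_mem hu) hutP) hu
            rw [show u⁻¹ * (u * t * u⁻¹) * u = t by group] at hm2
            exact hm2
          exact ⟨hPrefl_to_inv t htP htR,
            fun hc => h2 ((isRightInversion_iff_eta cs htR u).mp hc)⟩
      · rintro ⟨hw0t, hnot⟩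
        have htR := hw0t.1
        have htP := hinv_to_P t hw0t
        have h2 : eta cs u t = 0 := by
          rcases hzmod (eta cs u t) with h | h
          · exact h
          · exact absurd ((isRightInversion_iff_eta cs htR u).mpr h) hnot
        have h1 : eta cs w0 (u * t * u⁻¹) = 1 :=
          heta1_of _ (mul_mem (mul_mem hu htP) (inv_mem hu)) (htR.conj u)
        apply (isRightInversion_iff_eta cs htR _).mpr
        rw [eta_mul, h1, h2, add_zero]
    calc cs.length (w0 * u)
        = {t : W | cs.IsRightInversion (w0 * u) t}.ncard := (ncard_invSet cs _).symm
      _ = ({t : W | cs.IsRightInversion w0 t} \ {t : W | cs.IsRightInversion u t}).ncard := by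
          rw [hset]
      _ = {t : W | cs.IsRightInversion w0 t}.ncard
            - {t : W | cs.IsRightInversion u t}.ncard :=
          Set.ncard_diff hsub (invSet_finite cs u)
      _ = cs.length w0 - cs.length u := by rw [ncard_invSet, ncard_invSet]
  have hw0_inv : w0⁻¹ = w0 := by
    have h0 : cs.length (w0 * w0) = 0 := by
      rw [hG1 w0 hmem]
      omega
    exact inv_eq_of_mul_eq_one_right (cs.length_eq_zero_iff.mp h0)
  have huniq : ∀ u ∈ Subgroup.closure (cs.simple '' I),
      cs.length u = cs.length w0 → u = w0 := by
    intro u hu hlen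
    have h0 : cs.length (w0 * u) = 0 := by
      rw [hG1 u hu, hlen]
      omega
    have h1 := cs.length_eq_zero_iff.mp h0
    rw [← inv_inv u, inv_eq_of_mul_eq_one_left h1]
    exact hw0_inv
  -- Step A : normalizer ≤ centralizer
  have stepA : Subgroup.normalizer (Subgroup.closure (cs.simple '' I))
      ≤ Subgroup.centralizer {w0} := by
    intro g hg
    have hCne : (cs.length '' {x : W | g⁻¹ * x ∈ Subgroup.closure (cs.simple '' I)}).Nonempty := by
      refine ⟨cs.length g, g, ?_, rfl⟩
      simp only [Set.mem_setOf_eq, inv_mul_cancel]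
      exact one_mem _
    obtain ⟨n, hnC, hnlen⟩ := Nat.sInf_mem hCne
    have hnC' : g⁻¹ * n ∈ Subgroup.closure (cs.simple '' I) := hnC
    have hnmin : ∀ y : W, g⁻¹ * y ∈ Subgroup.closure (cs.simple '' I) →
        cs.length n ≤ cs.length y := by
      intro y hy
      rw [hnlen]
      exact Nat.sInf_le ⟨y, hy, rfl⟩
    have hqP := hnC'
    have hgn : g = n * (g⁻¹ * n)⁻¹ := by group
    have hdisj : ∀ t : W, cs.IsRightInversion n t →
        t ∉ Subgroup.closure (cs.simple '' I) := by
      intro t ht htP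
      have hmm : g⁻¹ * (n * t) ∈ Subgroup.closure (cs.simple '' I) := by
        rw [show g⁻¹ * (n * t) = (g⁻¹ * n) * t by group]
        exact mul_mem hqP htP
      have := hnmin _ hmm
      have := ht.2
      omega
    have himg_inj : Function.Injective (fun x : W => w0⁻¹ * x * w0) := by
      intro x1 x2 h
      simp only at h
      have := congrArg (fun z => w0 * z * w0⁻¹) h
      simpa [mul_assoc] using this
    have hset : {t : W | cs.IsRightInversion (n * w0) t}
        = {t : W | cs.IsRightInversion w0 t}
          ∪ ((fun x : W => w0⁻¹ * x * w0) '' {t : W | cs.IsRightInversion n t}) := by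
      ext t
      simp only [Set.mem_setOf_eq, Set.mem_union, Set.mem_image]
      constructor
      · intro ht
        have htR := ht.1
        have he : eta cs n (w0 * t * w0⁻¹) + eta cs w0 t = 1 := by
          rw [← eta_mul]
          exact (isRightInversion_iff_eta cs htR _).mp ht
        by_cases hB : eta cs w0 t = 1
        · exact Or.inl ((isRightInversion_iff_eta cs htR w0).mpr hB)
        · right
          have hB0 : eta cs w0 t = 0 := (hzmod _).resolve_right hB
          have hA : eta cs n (w0 * t * w0⁻¹) = 1 := by rwa [hB0, add_zero] at he
          exact ⟨w0 * t * w0⁻¹,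
            (isRightInversion_iff_eta cs (htR.conj w0) n).mpr hA, by group⟩
      · intro ht
        rcases ht with hw0t | ⟨x, hx, rfl⟩
        · have htR := hw0t.1
          have htP := hinv_to_P t hw0t
          have hc : w0 * t * w0⁻¹ = t := hcentral' t htP
          have hA : eta cs n (w0 * t * w0⁻¹) = 0 := by
            rw [hc]
            rcases hzmod (eta cs n t) with h | h
            · exact h
            · exact absurd htP (hdisj t ((isRightInversion_iff_eta cs htR n).mpr h))
          apply (isRightInversion_iff_eta cs htR _).mpr
          rw [eta_mul, hA, zero_add]
          exact (isRightInversion_iff_eta cs htR w0).mp hw0t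
        · have hxR := hx.1
          have htR : cs.IsReflection (w0⁻¹ * x * w0) := by
            have := hxR.conj w0⁻¹
            rwa [inv_inv] at this
          have hxc : w0 * (w0⁻¹ * x * w0) * w0⁻¹ = x := by group
          have hA : eta cs n (w0 * (w0⁻¹ * x * w0) * w0⁻¹) = 1 := by
            rw [hxc]
            exact (isRightInversion_iff_eta cs hxR n).mp hx
          have hB : eta cs w0 (w0⁻¹ * x * w0) = 0 := by
            rcases hzmod (eta cs w0 (w0⁻¹ * x * w0)) with h | h
            · exact h
            · exfalso
              have htP' := hP_of_eta1 _ htR h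
              have hxP : x ∈ Subgroup.closure (cs.simple '' I) := by
                rw [← hxc, hcentral' _ htP']
                exact htP'
              exact (hdisj x hx) hxP
          apply (isRightInversion_iff_eta cs htR _).mpr
          rw [eta_mul, hA, hB, add_zero]
    have hdisj2 : Disjoint {t : W | cs.IsRightInversion w0 t}
        ((fun x : W => w0⁻¹ * x * w0) '' {t : W | cs.IsRightInversion n t}) := by
      rw [Set.disjoint_left]
      rintro t htw0 ⟨x, hx, rfl⟩
      have htP := hinv_to_P _ htw0
      have hxc : w0 * (w0⁻¹ * x * w0) * w0⁻¹ = x := by group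
      have hxP : x ∈ Subgroup.closure (cs.simple '' I) := by
        rw [← hxc, hcentral' _ htP]
        exact htP
      exact (hdisj x hx) hxP
    have hcount : cs.length (n * w0) = cs.length n + cs.length w0 := by
      have hn1 := ncard_invSet cs (n * w0)
      rw [hset, Set.ncard_union_eq hdisj2 (invSet_finite cs w0)
          ((invSet_finite cs n).image _),
        Set.ncard_image_of_injective _ himg_inj, ncard_invSet, ncard_invSet] at hn1
      omega
    have hnw0P : n * w0 * n⁻¹ ∈ Subgroup.closure (cs.simple '' I) := by
      have hin : (g⁻¹ * n) * w0 * (g⁻¹ * n)⁻¹ ∈ Subgroup.closure (cs.simple '' I) :=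
        mul_mem (mul_mem hqP hmem) (inv_mem hqP)
      have h3 := (Subgroup.mem_normalizer_iff.mp hg ((g⁻¹ * n) * w0 * (g⁻¹ * n)⁻¹)).mp hin
      rw [show g * ((g⁻¹ * n) * w0 * (g⁻¹ * n)⁻¹) * g⁻¹ = n * w0 * n⁻¹ by group] at h3
      exact h3
    have hge : cs.length w0 ≤ cs.length (n * w0 * n⁻¹) := by
      have h1 := cs.length_mul_ge_length_sub_length (n * w0) n⁻¹
      rw [cs.length_inv, hcount] at h1
      omega
    have hnw0 : n * w0 * n⁻¹ = w0 :=
      huniq _ hnw0P (le_antisymm (hlongest _ hnw0P) hge)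
    have hq_comm : (g⁻¹ * n)⁻¹ * w0 * (g⁻¹ * n) = w0 := by
      have hcc := hcentral (g⁻¹ * n) hqP
      calc (g⁻¹ * n)⁻¹ * w0 * (g⁻¹ * n) = (g⁻¹ * n)⁻¹ * (w0 * (g⁻¹ * n)) := by group
        _ = (g⁻¹ * n)⁻¹ * ((g⁻¹ * n) * w0) := by rw [hcc]
        _ = w0 := by group
    have hgw : g * w0 * g⁻¹ = w0 := by
      conv_lhs => rw [hgn]
      rw [show n * (g⁻¹ * n)⁻¹ * w0 * (n * (g⁻¹ * n)⁻¹)⁻¹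
          = n * ((g⁻¹ * n)⁻¹ * w0 * (g⁻¹ * n)) * n⁻¹ by group, hq_comm, hnw0]
    apply Subgroup.mem_centralizer_iff.mpr
    intro y hy
    rw [Set.mem_singleton_iff] at hy
    subst hy
    have h6 := congrArg (fun z => z * g) hgw
    rw [inv_mul_cancel_right] at h6
    exact h6.symm
  -- Step B : centralizer ≤ normalizer
  have stepB : Subgroup.centralizer {w0}
      ≤ Subgroup.normalizer (Subgroup.closure (cs.simple '' I)) := by
    have key : ∀ h : W, w0 * h = h * w0 →
        ∀ x ∈ Subgroup.closure (cs.simple '' I),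
          h * x * h⁻¹ ∈ Subgroup.closure (cs.simple '' I) := by
      intro h hh x hx
      induction hx using Subgroup.closure_induction with
      | mem x hx =>
        have hxP : x ∈ Subgroup.closure (cs.simple '' I) := Subgroup.subset_closure hx
        have hxR : cs.IsReflection x := by
          obtain ⟨i, hi, rfl⟩ := hx
          exact cs.isReflection_simple i
        have hx1 : eta cs w0 x = 1 := heta1_of x hxP hxR
        have hxc : w0 * x * w0⁻¹ = x := hcentral' x hxP
        have hcomp : rho cs w0 (rho cs h (x, 0)) = rho cs h (rho cs w0 (x, 0)) := by
          calc rho cs w0 (rho cs h (x, 0)) = rho cs (w0 * h) (x, 0) := by rw [map_mul]; rfl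
            _ = rho cs (h * w0) (x, 0) := by rw [hh]
            _ = rho cs h (rho cs w0 (x, 0)) := by rw [map_mul]; rfl
        rw [rho_apply cs h x 0, rho_apply cs w0 x 0, rho_apply, rho_apply] at hcomp
        rw [hxc, hx1] at hcomp
        have h2 := congrArg Prod.snd hcomp
        simp only at h2
        have h3 : eta cs w0 (h * x * h⁻¹) = 1 := by
          have h4 : eta cs h x + eta cs w0 (h * x * h⁻¹) = eta cs h x + 1 := by
            rw [zero_add] at h2
            rw [h2]
            ring
          exact add_left_cancel h4
        exact mem_P_of_eta_one cs I hmem h3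
      | one => simpa using one_mem (Subgroup.closure (cs.simple '' I))
      | mul x y hx' hy' ihx ihy =>
        rw [show h * (x * y) * h⁻¹ = (h * x * h⁻¹) * (h * y * h⁻¹) by group]
        exact mul_mem ihx ihy
      | inv x hx' ih =>
        rw [show h * x⁻¹ * h⁻¹ = (h * x * h⁻¹)⁻¹ by group]
        exact inv_mem ih
    intro g hg
    have hgw : w0 * g = g * w0 := Subgroup.mem_centralizer_iff.mp hg w0 rfl
    have hgw' : w0 * g⁻¹ = g⁻¹ * w0 := by
      calc w0 * g⁻¹ = g⁻¹ * (g * w0) * g⁻¹ := by group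
        _ = g⁻¹ * (w0 * g) * g⁻¹ := by rw [hgw]
        _ = g⁻¹ * w0 := by group
    apply Subgroup.mem_normalizer_iff.mpr
    intro h
    constructor
    · intro hh
      exact key g hgw h hh
    · intro hh
      have h5 := key g⁻¹ hgw' _ hh
      rwa [show g⁻¹ * (g * h * g⁻¹) * g⁻¹⁻¹ = h by group] at h5
  exact le_antisymm stepB stepA
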